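/- Under the constrained calibration setup, suppose the supportedness condition $\lambda_{\min} \le \lambda_{\max}$ holds. Then for every finite real $\lambda_R$ with $\lambda_{\min} \le \lambda_R \le \lambda_{\max}$, the constrained minimizer $\widehat{W}$ is also a minimizer of the penalized objective over the whole set: $\widehat{W} \in \arg\min_{W' \in \mathcal{Q}} \{ L(W') + \lambda_R \|W' - W_l\|_F^2 \}$. -/
import Mathlib


/-- Frobenius norm of a real matrix. -/
noncomputable def frobNorm {m n : ℕ} (A : Matrix (Fin m) (Fin n) ℝ) : ℝ :=
  Real.sqrt (∑ i, ∑ j, (A i j) ^ 2)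

/-- Squared-Frobenius weight drift `D(W') = ‖W' - Wl‖_F²`. -/
noncomputable def drift {m n : ℕ} (Wl W' : Matrix (Fin m) (Fin n) ℝ) : ℝ :=
  (frobNorm (W' - Wl)) ^ 2

/-- `λ_min := max{0, max_{W' ∈ S₊} (L(Ŵ) - L(W')) / (D(W') - D(Ŵ))}` as an extended
real, with the convention `max ∅ = -∞` (so the outer max gives `0` when `S₊ = ∅`). -/
noncomputable def lamMin {m n : ℕ} (Wl : Matrix (Fin m) (Fin n) ℝ)
    (Q : Finset (Matrix (Fin m) (Fin n) ℝ)) (L : Matrix (Fin m) (Fin n) ℝ → ℝ)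
    (What : Matrix (Fin m) (Fin n) ℝ) : EReal :=
  max 0 (sSup {x : EReal | ∃ W' ∈ Q, drift Wl What < drift Wl W' ∧
    x = (((L What - L W') / (drift Wl W' - drift Wl What) : ℝ) : EReal)})

/-- `λ_max := min_{W' ∈ S₋} (L(W') - L(Ŵ)) / (D(Ŵ) - D(W'))` as an extended real,
with the convention `min ∅ = +∞`. -/
noncomputable def lamMax {m n : ℕ} (Wl : Matrix (Fin m) (Fin n) ℝ)
    (Q : Finset (Matrix (Fin m) (Fin n) ℝ)) (L : Matrix (Fin m) (Fin n) ℝ → ℝ)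
    (What : Matrix (Fin m) (Fin n) ℝ) : EReal :=
  sInf {x : EReal | ∃ W' ∈ Q, drift Wl W' < drift Wl What ∧
    x = (((L W' - L What) / (drift Wl What - drift Wl W') : ℝ) : EReal)}

/-- Sufficiency direction of the constraint–penalty correspondence: if the
supportedness condition `λ_min ≤ λ_max` holds, then for every finite `λ_R` with
`λ_min ≤ λ_R ≤ λ_max`, the constrained minimizer `Ŵ` also minimizes the penalized
objective `L(W') + λ_R ‖W' - Wl‖_F²` over all of `Q`. -/
theorem stmt5
    {m n : ℕ} (Wl : Matrix (Fin m) (Fin n) ℝ)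
    (Q : Finset (Matrix (Fin m) (Fin n) ℝ))
    (L : Matrix (Fin m) (Fin n) ℝ → ℝ)
    (R : ℝ) (hR : 0 < R)
    (What : Matrix (Fin m) (Fin n) ℝ)
    (hWhatQ : What ∈ Q) (hWhatR : drift Wl What ≤ R ^ 2)
    (hWhatMin : ∀ W' ∈ Q, drift Wl W' ≤ R ^ 2 → L What ≤ L W')
    (hsupp : lamMin Wl Q L What ≤ lamMax Wl Q L What)
    (lamR : ℝ)
    (h1 : lamMin Wl Q L What ≤ (lamR : EReal))
    (h2 : (lamR : EReal) ≤ lamMax Wl Q L What) :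
    ∀ W' ∈ Q,
      L What + lamR * drift Wl What ≤ L W' + lamR * drift Wl W' := by
  intro W' hW'
  rcases lt_trichotomy (drift Wl W') (drift Wl What) with h | h | h
  · have hmem : (((L W' - L What) / (drift Wl What - drift Wl W') : ℝ) : EReal) ∈
        {x : EReal | ∃ W'' ∈ Q, drift Wl W'' < drift Wl What ∧
          x = (((L W'' - L What) / (drift Wl What - drift Wl W'') : ℝ) : EReal)} :=
      ⟨W', hW', h, rfl⟩
    have hc := le_trans h2 (sInf_le hmem)
    rw [EReal.coe_le_coe_iff] at hc
    have hd : 0 < drift Wl What - drift Wl W' := by linarith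
    rw [le_div_iff₀ hd] at hc
    nlinarith
  · have hle : drift Wl W' ≤ R ^ 2 := by rw [h]; exact hWhatR
    have := hWhatMin W' hW' hle
    rw [h]; linarith
  · have hmem : (((L What - L W') / (drift Wl W' - drift Wl What) : ℝ) : EReal) ∈
        {x : EReal | ∃ W'' ∈ Q, drift Wl What < drift Wl W'' ∧
          x = (((L What - L W'') / (drift Wl W'' - drift Wl What) : ℝ) : EReal)} :=
      ⟨W', hW', h, rfl⟩
    have hc := le_trans (le_trans (le_sSup hmem) (le_max_right _ _)) h1
    rw [EReal.coe_le_coe_iff] at hc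
    have hd : 0 < drift Wl W' - drift Wl What := by linarith
    rw [div_le_iff₀ hd] at hc
    nlinarith
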